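/- arXiv:2407.20971 — 3 statements merged into one kernel-verified Lean document; each statement's English description precedes it below -/
import Mathlib

section
/- Let Ω ⊆ ℝ^N be a bounded open set with d(x) := dist(x, ∂Ω), let α ∈ (0,1), and set β := α/(α+1). Assume there exist δ ∈ (0,1), a Lipschitz map Π from Ω_δ := {x ∈ Ω : d(x) < δ} to ∂Ω, and a Lipschitz map ν : ∂Ω → ℝ^N with |ν(z)| = 1 for all z ∈ ∂Ω, such that for every x ∈ Ω_δ: d(x) = |x − Π(x)|, x − Π(x) = −d(x)·ν(Π(x)), and the half-open segment (Π(x), x] is contained in Ω. Let u : ℝ^N → ℝ be continuously differentiable on a neighborhood of the closure of Ω, with u = 0 on ∂Ω, and suppose its gradient ∇u is α-Hölder continuous on the closure of Ω with Hölder constant H. Define ‖u‖_{C^{1,α}} := sup_{closure Ω} |u| + sup_{closure Ω} |∇u| + H. Then there exists a constant C > 0, depending only on Ω, δ, α, and the Lipschitz constants of Π and ν (but not on u), such that |u(x)/d(x) − u(y)/d(y)| ≤ C ‖u‖_{C^{1,α}} |x − y|^β for all x, y ∈ Ω. -/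
open MeasureTheory Filter Set

lemma aux_le_biSup {X : Type*} (s : Set X) (f : X → ℝ) {B : ℝ}
    (hB : ∀ z ∈ s, f z ≤ B) {z : X} (hz : z ∈ s) : f z ≤ ⨆ w ∈ s, f w := by
  have hbdd : ∀ w, (⨆ _ : w ∈ s, f w) ≤ max B 0 := by
    intro w
    by_cases h : w ∈ s
    · rw [ciSup_pos h]; exact le_max_of_le_left (hB w h)
    · have : IsEmpty (w ∈ s) := by simpa using h
      rw [Real.iSup_of_isEmpty]
      exact le_max_right _ _
  calc f z = ⨆ _ : z ∈ s, f z := (ciSup_pos (f := fun _ => f z) hz).symm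
    _ ≤ ⨆ w ∈ s, f w := le_ciSup ⟨max B 0, Set.forall_mem_range.2 hbdd⟩ z

set_option maxHeartbeats 2000000 in
theorem stmt_3 (N : ℕ) (Ω : Set (EuclideanSpace ℝ (Fin N)))
    (hΩo : IsOpen Ω) (hΩb : Bornology.IsBounded Ω)
    (d : EuclideanSpace ℝ (Fin N) → ℝ)
    (hd : ∀ x, d x = Metric.infDist x (frontier Ω))
    (α : ℝ) (hα : α ∈ Set.Ioo (0 : ℝ) 1) (β : ℝ) (hβ : β = α / (α + 1))
    (δ : ℝ) (hδ : δ ∈ Set.Ioo (0 : ℝ) 1)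
    (Pr ν : EuclideanSpace ℝ (Fin N) → EuclideanSpace ℝ (Fin N))
    (LPr Lν : NNReal)
    (hPrLip : LipschitzOnWith LPr Pr {x ∈ Ω | d x < δ})
    (hPrMem : ∀ x ∈ {x ∈ Ω | d x < δ}, Pr x ∈ frontier Ω)
    (hνLip : LipschitzOnWith Lν ν (frontier Ω))
    (hνUnit : ∀ z ∈ frontier Ω, ‖ν z‖ = 1)
    (hdist : ∀ x ∈ {x ∈ Ω | d x < δ}, d x = ‖x - Pr x‖)
    (hdir : ∀ x ∈ {x ∈ Ω | d x < δ}, x - Pr x = -(d x) • ν (Pr x))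
    (hseg : ∀ x ∈ {x ∈ Ω | d x < δ}, ∀ t ∈ Set.Ioc (0 : ℝ) 1,
      Pr x + t • (x - Pr x) ∈ Ω) :
    ∃ C > 0, ∀ (u : EuclideanSpace ℝ (Fin N) → ℝ)
      (U : Set (EuclideanSpace ℝ (Fin N))) (H : ℝ),
      IsOpen U → closure Ω ⊆ U → ContDiffOn ℝ 1 u U →
      (∀ z ∈ frontier Ω, u z = 0) →
      (∀ x ∈ closure Ω, ∀ y ∈ closure Ω,
        ‖fderiv ℝ u x - fderiv ℝ u y‖ ≤ H * ‖x - y‖ ^ α) →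
      ∀ x ∈ Ω, ∀ y ∈ Ω,
        |u x / d x - u y / d y| ≤
          C * ((⨆ z ∈ closure Ω, |u z|) + (⨆ z ∈ closure Ω, ‖fderiv ℝ u z‖) + H) *
            ‖x - y‖ ^ β := by
  obtain ⟨hα0, hα1⟩ := hα
  obtain ⟨hδ0, hδ1⟩ := hδ
  have hβ0 : 0 < β := by rw [hβ]; positivity
  have hβα : β ≤ α := by
    rw [hβ, div_le_iff₀ (by linarith)]; nlinarith
  have hβ1 : β ≤ 1 := le_trans hβα hα1.le
  -- dispose of the empty case
  by_cases hΩne : Ω.Nonempty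
  swap
  · refine ⟨1, one_pos, fun u U H _ _ _ _ _ x hx => absurd ⟨x, hx⟩ hΩne⟩
  obtain ⟨x₀, hx₀⟩ := hΩne
  -- the frontier is nonempty
  have hfne : (frontier Ω).Nonempty := by
    by_contra hfe
    rw [Set.not_nonempty_iff_eq_empty] at hfe
    have hdx₀ : d x₀ = 0 := by rw [hd, hfe, Metric.infDist_empty]
    have := hPrMem x₀ ⟨hx₀, by rw [hdx₀]; exact hδ0⟩
    rw [hfe] at this; exact this
  obtain ⟨z₀, hz₀⟩ := hfne
  have hΩnu : Ω ≠ univ := by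
    rintro rfl
    rw [frontier_univ] at hz₀; exact hz₀
  -- positivity of d on Ω
  have hdpos : ∀ x ∈ Ω, 0 < d x := by
    intro x hx
    rw [hd]
    refine (IsClosed.notMem_iff_infDist_pos isClosed_frontier ⟨z₀, hz₀⟩).1 ?_
    rw [hΩo.frontier_eq]
    exact fun h => h.2 hx
  -- d is 1-Lipschitz
  have hdlip : ∀ x y, |d x - d y| ≤ ‖x - y‖ := by
    intro x y
    have := (Metric.lipschitz_infDist_pt (frontier Ω)).dist_le_mul x y
    rw [hd, hd, ← Real.dist_eq, ← dist_eq_norm]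
    simpa using this
  -- balls of radius d are inside Ω
  have hball : ∀ y ∈ Ω, Metric.ball y (d y) ⊆ Ω := by
    intro y hy w hw
    by_contra hwΩ
    obtain ⟨z, hzf, hze⟩ := exists_mem_frontier_infDist_compl_eq_dist hy hΩnu
    have h1 : d y ≤ dist y z := by rw [hd]; exact Metric.infDist_le_dist_of_mem hzf
    have h2 : Metric.infDist y Ωᶜ ≤ dist y w := Metric.infDist_le_dist_of_mem hwΩ
    rw [hze] at h2
    rw [Metric.mem_ball, dist_comm] at hw
    linarith
  -- membership lemma for the collar
  have hcollar : ∀ w, w ∈ Ω → d w < δ → w ∈ {x ∈ Ω | d x < δ} := fun w h1 h2 => ⟨h1, h2⟩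
  -- segments from the projection stay in the closure
  have hsegsub : ∀ w ∈ {x ∈ Ω | d x < δ}, segment ℝ (Pr w) w ⊆ closure Ω := by
    intro w hw
    rw [segment_eq_image']
    rintro _ ⟨t, ⟨ht0, ht1⟩, rfl⟩
    rcases eq_or_lt_of_le ht0 with h | h
    · simp only [← h, zero_smul, add_zero]
      exact frontier_subset_closure (hPrMem w hw)
    · exact subset_closure (hseg w hw t ⟨h, ht1⟩)
  -- the constant
  set r₀ : ℝ := (δ / 2) * (δ / 2) with hr₀def
  have hr₀pos : 0 < r₀ := by positivity
  have hr₀lt : r₀ < 1 := by nlinarith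
  refine ⟨2 / (δ * r₀ ^ β) + 2 / δ + 4 + (LPr : ℝ) ^ α + (Lν : ℝ) * (LPr : ℝ), by positivity,
    ?_⟩
  intro u U H hU hUsub hCD hu0 hHold
  set S₁ := ⨆ z ∈ closure Ω, |u z| with hS₁def
  set S₂ := ⨆ z ∈ closure Ω, ‖fderiv ℝ u z‖ with hS₂def
  set M := S₁ + S₂ + H with hMdef
  set C : ℝ := 2 / (δ * r₀ ^ β) + 2 / δ + 4 + (LPr : ℝ) ^ α + (Lν : ℝ) * (LPr : ℝ) with hCdef
  have hCpos : 0 < C := by positivity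
  -- basic facts about u
  have hKcomp : IsCompact (closure Ω) := hΩb.isCompact_closure
  have hucont : ContinuousOn u (closure Ω) := hCD.continuousOn.mono hUsub
  have hfd : ∀ z ∈ U, DifferentiableAt ℝ u z := by
    intro z hz
    exact (hCD.differentiableOn one_ne_zero).differentiableAt (hU.mem_nhds hz)
  have hfdcont : ContinuousOn (fderiv ℝ u) U :=
    hCD.continuousOn_fderiv_of_isOpen hU le_rfl
  obtain ⟨B₁, hB₁⟩ := hKcomp.exists_bound_of_continuousOn hucont
  obtain ⟨B₂, hB₂⟩ := hKcomp.exists_bound_of_continuousOn ((hfdcont.mono hUsub).norm)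
  have hS₁le : ∀ z ∈ closure Ω, |u z| ≤ S₁ := by
    intro z hz
    exact aux_le_biSup (closure Ω) (fun z => |u z|)
      (fun w hw => by simpa [Real.norm_eq_abs] using hB₁ w hw) hz
  have hS₂le : ∀ z ∈ closure Ω, ‖fderiv ℝ u z‖ ≤ S₂ := by
    intro z hz
    exact aux_le_biSup (closure Ω) (fun z => ‖fderiv ℝ u z‖)
      (fun w hw => by simpa using hB₂ w hw) hz
  have hS₁0 : 0 ≤ S₁ := le_trans (abs_nonneg _) (hS₁le x₀ (subset_closure hx₀))
  have hS₂0 : 0 ≤ S₂ := le_trans (norm_nonneg _) (hS₂le x₀ (subset_closure hx₀))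
  have hH0 : 0 ≤ H := by
    have hx₀z₀ : x₀ ≠ z₀ := by
      intro h
      rw [hΩo.frontier_eq] at hz₀
      exact hz₀.2 (h ▸ hx₀)
    have hc : (0:ℝ) < ‖x₀ - z₀‖ ^ α :=
      Real.rpow_pos_of_pos (by rwa [norm_sub_pos_iff]) α
    have h1 := hHold x₀ (subset_closure hx₀) z₀ (frontier_subset_closure hz₀)
    nlinarith [norm_nonneg (fderiv ℝ u x₀ - fderiv ℝ u z₀)]
  have hM0 : 0 ≤ M := by rw [hMdef]; linarith
  have hS₂M : S₂ ≤ M := by rw [hMdef]; linarith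
  have hHM : H ≤ M := by rw [hMdef]; linarith
  -- mean value inequality on convex subsets of the closure
  have mvt : ∀ s : Set (EuclideanSpace ℝ (Fin N)), Convex ℝ s → s ⊆ closure Ω →
      ∀ a ∈ s, ∀ b ∈ s, |u a - u b| ≤ S₂ * ‖a - b‖ := by
    intro s hconv hsub a ha b hb
    have := hconv.norm_image_sub_le_of_norm_fderiv_le
      (fun z hz => hfd z (hUsub (hsub hz)))
      (fun z hz => hS₂le z (hsub hz)) hb ha
    simpa [Real.norm_eq_abs] using this
  -- |u| ≤ (M/δ) d on Ω
  have hu_le : ∀ w ∈ Ω, |u w| ≤ M / δ * d w := by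
    intro w hw
    by_cases hwδ : d w < δ
    · have hwc := hcollar w hw hwδ
      have h1 : |u w - u (Pr w)| ≤ S₂ * ‖w - Pr w‖ :=
        mvt _ (convex_segment _ _) (hsegsub w hwc)
          w (right_mem_segment ℝ (Pr w) w) (Pr w) (left_mem_segment ℝ (Pr w) w)
      rw [hu0 (Pr w) (hPrMem w hwc), sub_zero] at h1
      rw [← hdist w hwc] at h1
      have hdw : 0 ≤ d w := (hdpos w hw).le
      calc |u w| ≤ S₂ * d w := h1
        _ ≤ M / δ * d w := by
            apply mul_le_mul_of_nonneg_right _ hdw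
            calc S₂ ≤ M := hS₂M
              _ = M * 1 := (mul_one M).symm
              _ ≤ M * (1 / δ) := by
                  apply mul_le_mul_of_nonneg_left _ hM0
                  rw [le_div_iff₀ hδ0]; linarith
              _ = M / δ := by ring
    · push_neg at hwδ
      calc |u w| ≤ S₁ := hS₁le w (subset_closure hw)
        _ ≤ M := by rw [hMdef]; linarith
        _ = M / δ * δ := by field_simp
        _ ≤ M / δ * d w := mul_le_mul_of_nonneg_left hwδ (by positivity)
  -- refined Taylor estimate in the collar
  have htay : ∀ w ∈ Ω, d w < δ →
      |u w / d w + (fderiv ℝ u (Pr w)) (ν (Pr w))| ≤ H * d w ^ α := by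
    intro w hwΩ hwδ
    have hwc := hcollar w hwΩ hwδ
    set A := fderiv ℝ u (Pr w) with hAdef
    have hPw : Pr w ∈ closure Ω := frontier_subset_closure (hPrMem w hwc)
    have hdw : 0 < d w := hdpos w hwΩ
    have hsub := hsegsub w hwc
    have hzle : ∀ z ∈ segment ℝ (Pr w) w, ‖z - Pr w‖ ≤ d w := by
      rw [segment_eq_image']
      rintro _ ⟨t, ⟨ht0, ht1⟩, rfl⟩
      simp only [add_sub_cancel_left]
      rw [norm_smul, Real.norm_eq_abs, abs_of_nonneg ht0, ← hdist w hwc]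
      nlinarith
    have hdb : ∀ z ∈ segment ℝ (Pr w) w, ‖fderiv ℝ u z - A‖ ≤ H * d w ^ α := by
      intro z hz
      calc ‖fderiv ℝ u z - A‖ ≤ H * ‖z - Pr w‖ ^ α := hHold z (hsub hz) (Pr w) hPw
        _ ≤ H * d w ^ α := by
            apply mul_le_mul_of_nonneg_left _ hH0
            exact Real.rpow_le_rpow (norm_nonneg _) (hzle z hz) hα0.le
    have hvd : ∀ z ∈ segment ℝ (Pr w) w, DifferentiableAt ℝ (fun z => u z - A z) z :=
      fun z hz => (hfd z (hUsub (hsub hz))).sub A.differentiableAt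
    have hvf : ∀ z ∈ segment ℝ (Pr w) w, ‖fderiv ℝ (fun z => u z - A z) z‖ ≤ H * d w ^ α := by
      intro z hz
      rw [fderiv_fun_sub (hfd z (hUsub (hsub hz))) A.differentiableAt, A.fderiv]
      exact hdb z hz
    have key := (convex_segment (Pr w) w).norm_image_sub_le_of_norm_fderiv_le hvd hvf
      (left_mem_segment ℝ (Pr w) w) (right_mem_segment ℝ (Pr w) w)
    -- key : ‖(u w - A w) - (u (Pr w) - A (Pr w))‖ ≤ H * d w ^ α * ‖w - Pr w‖
    rw [hu0 (Pr w) (hPrMem w hwc)] at key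
    have hAw : u w - A w - (0 - A (Pr w)) = u w - A (w - Pr w) := by
      rw [map_sub]; ring
    rw [hAw] at key
    have hAe : A (w - Pr w) = -(d w * A (ν (Pr w))) := by
      rw [hdir w hwc, A.map_smul, smul_eq_mul]; ring
    rw [hAe] at key
    rw [← hdist w hwc] at key
    have e : u w / d w + A (ν (Pr w)) = (u w - -(d w * A (ν (Pr w)))) / d w := by
      field_simp
      ring
    rw [e, abs_div, abs_of_pos hdw, div_le_iff₀ hdw]
    simpa [Real.norm_eq_abs] using key
  -- main estimate, assuming d y <= d x
  have key : ∀ x ∈ Ω, ∀ y ∈ Ω, d y ≤ d x →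
      |u x / d x - u y / d y| ≤ C * M * ‖x - y‖ ^ β := by
    intro x hx y hy hdyx
    set r := ‖x - y‖ with hrdef
    have hr0 : 0 ≤ r := norm_nonneg _
    have hdx : 0 < d x := hdpos x hx
    have hdy : 0 < d y := hdpos y hy
    rcases eq_or_lt_of_le hr0 with hr | hr
    · have hxy : x = y := sub_eq_zero.1 (by rwa [← norm_eq_zero, ← hrdef, eq_comm])
      rw [hxy, sub_self, abs_zero, ← hr, Real.zero_rpow hβ0.ne', mul_zero]
    · by_cases hcase : r₀ ≤ r
      · -- large separation
        have h1 : |u x / d x| ≤ M / δ := by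
          rw [abs_div, abs_of_pos hdx, div_le_iff₀ hdx]
          calc |u x| ≤ M / δ * d x := hu_le x hx
            _ = M / δ * d x := rfl
        have h2 : |u y / d y| ≤ M / δ := by
          rw [abs_div, abs_of_pos hdy, div_le_iff₀ hdy]
          exact hu_le y hy
        have hrβ : r₀ ^ β ≤ r ^ β := Real.rpow_le_rpow hr₀pos.le hcase hβ0.le
        have hr₀β : (0:ℝ) < r₀ ^ β := Real.rpow_pos_of_pos hr₀pos β
        calc |u x / d x - u y / d y| ≤ |u x / d x| + |u y / d y| := by
              rw [sub_eq_add_neg]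
              exact (abs_add_le _ _).trans (by rw [abs_neg])
          _ ≤ M / δ + M / δ := add_le_add h1 h2
          _ = 2 / (δ * r₀ ^ β) * M * r₀ ^ β := by field_simp; ring
          _ ≤ 2 / (δ * r₀ ^ β) * M * r ^ β := by
              apply mul_le_mul_of_nonneg_left hrβ (by positivity)
          _ ≤ C * M * r ^ β := by
              apply mul_le_mul_of_nonneg_right _ (Real.rpow_nonneg hr0 β)
              apply mul_le_mul_of_nonneg_right _ hM0
              have hp1 : (0:ℝ) ≤ 2 / δ := by positivity
              have hp2 : (0:ℝ) ≤ (LPr : ℝ) ^ α := by positivity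
              have hp3 : (0:ℝ) ≤ (Lν : ℝ) * (LPr : ℝ) := by positivity
              rw [hCdef]; linarith
      · push_neg at hcase
        have hr1 : r < 1 := hcase.trans hr₀lt
        set ρ := r ^ (1 / (α + 1) : ℝ) with hρdef
        have hρpos : 0 < ρ := Real.rpow_pos_of_pos hr _
        have hρβ : ρ ^ α = r ^ β := by
          rw [hρdef, ← Real.rpow_mul hr0]
          congr 1
          rw [hβ]
          field_simp
        have hrρβ : r / ρ = r ^ β := by
          have h1 : (1:ℝ) - 1 / (α + 1) = β := by rw [hβ]; field_simp; ring
          calc r / ρ = r ^ (1:ℝ) / r ^ (1 / (α + 1) : ℝ) := by rw [Real.rpow_one, hρdef]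
            _ = r ^ ((1:ℝ) - 1 / (α + 1)) := (Real.rpow_sub hr _ _).symm
            _ = r ^ β := by rw [h1]
        have hρlt : ρ < δ / 2 := by
          have h2 : ρ < r₀ ^ (1 / (α + 1) : ℝ) :=
            Real.rpow_lt_rpow hr0 hcase (div_pos one_pos (by linarith))
          have h3 : r₀ ^ (1 / (α + 1) : ℝ) ≤ δ / 2 := by
            have e : r₀ = (δ / 2) ^ (((2:ℕ):ℝ)) := by
              rw [Real.rpow_natCast, hr₀def]; ring
            rw [e, ← Real.rpow_mul (by positivity)]
            have hexp : (1:ℝ) ≤ ((2:ℕ):ℝ) * (1 / (α + 1)) := by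
              rw [mul_one_div, le_div_iff₀ (by linarith)]
              push_cast
              linarith
            calc (δ / 2) ^ (((2:ℕ):ℝ) * (1 / (α + 1))) ≤ (δ / 2) ^ (1:ℝ) :=
                  Real.rpow_le_rpow_of_exponent_ge (by positivity) (by linarith) hexp
              _ = δ / 2 := Real.rpow_one _
          linarith
        have hrltρ : r < ρ := by
          calc r = r ^ (1:ℝ) := (Real.rpow_one r).symm
            _ < ρ := by
                rw [hρdef]
                apply Real.rpow_lt_rpow_of_exponent_gt hr hr1
                rw [div_lt_one (by linarith)]
                linarith
        by_cases hcase2 : ρ ≤ d y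
        · -- both points are far from the boundary
          have hxball : x ∈ Metric.ball y (d y) := by
            rw [Metric.mem_ball, dist_eq_norm]
            exact lt_of_lt_of_le hrltρ hcase2
          have hsegxy : segment ℝ x y ⊆ closure Ω := fun z hz =>
            subset_closure (hball y hy ((convex_ball y (d y)).segment_subset hxball
              (Metric.mem_ball_self hdy) hz))
          have huxy : |u x - u y| ≤ M * r := by
            calc |u x - u y| ≤ S₂ * ‖x - y‖ :=
                  mvt _ (convex_segment x y) hsegxy x (left_mem_segment ℝ x y)
                    y (right_mem_segment ℝ x y)
              _ ≤ M * r := mul_le_mul_of_nonneg_right hS₂M hr0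
          have e1 : u x / d x - u y / d y
              = (u x - u y) / d x + u y * ((d y - d x) / (d x * d y)) := by
            field_simp
            ring
          have hdyx' : |d y - d x| ≤ r := by
            rw [abs_sub_comm]
            exact hdlip x y
          have hρdx : ρ ≤ d x := le_trans hcase2 hdyx
          have ht1 : |(u x - u y) / d x| ≤ M * (r / ρ) := by
            rw [abs_div, abs_of_pos hdx]
            calc |u x - u y| / d x ≤ M * r / d x := (div_le_div_iff_of_pos_right hdx).2 huxy
              _ ≤ M * r / ρ := div_le_div_of_nonneg_left (by positivity) hρpos hρdx
              _ = M * (r / ρ) := by ring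
          have ht2 : |u y * ((d y - d x) / (d x * d y))| ≤ M / δ * (r / ρ) := by
            rw [abs_mul, abs_div, abs_of_pos (mul_pos hdx hdy)]
            calc |u y| * (|d y - d x| / (d x * d y))
                ≤ (M / δ * d y) * (r / (d x * d y)) := by
                  apply mul_le_mul (hu_le y hy)
                    ((div_le_div_iff_of_pos_right (mul_pos hdx hdy)).2 hdyx')
                    (by positivity) (by positivity)
              _ = M / δ * (r / d x) := by field_simp
              _ ≤ M / δ * (r / ρ) := by
                  apply mul_le_mul_of_nonneg_left _ (by positivity)
                  exact div_le_div_of_nonneg_left hr0 hρpos hρdx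
          have hMδ : M ≤ M / δ := by
            rw [le_div_iff₀ hδ0]
            nlinarith
          calc |u x / d x - u y / d y|
              ≤ |(u x - u y) / d x| + |u y * ((d y - d x) / (d x * d y))| := by
                rw [e1]; exact abs_add_le _ _
            _ ≤ M * (r / ρ) + M / δ * (r / ρ) := add_le_add ht1 ht2
            _ = (M + M / δ) * r ^ β := by rw [← hrρβ]; ring
            _ ≤ (2 / δ * M) * r ^ β := by
                apply mul_le_mul_of_nonneg_right _ (Real.rpow_nonneg hr0 β)
                calc M + M / δ ≤ M / δ + M / δ := by linarith
                  _ = 2 / δ * M := by ring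
            _ ≤ C * M * r ^ β := by
                apply mul_le_mul_of_nonneg_right _ (Real.rpow_nonneg hr0 β)
                have h2δC : 2 / δ ≤ C := by
                  have hp0 : (0:ℝ) < 2 / (δ * r₀ ^ β) := by positivity
                  have hp2 : (0:ℝ) ≤ (LPr : ℝ) ^ α := by positivity
                  have hp3 : (0:ℝ) ≤ (Lν : ℝ) * (LPr : ℝ) := by positivity
                  rw [hCdef]; linarith
                exact mul_le_mul_of_nonneg_right h2δC hM0
        · -- both points are close to the boundary
          push_neg at hcase2
          have habs := abs_le.1 (hdlip x y)
          have hdxlt : d x < 2 * ρ := by nlinarith [hrltρ]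
          have hdxδ : d x < δ := by linarith
          have hdyδ : d y < δ := by linarith
          have hxc := hcollar x hx hdxδ
          have hyc := hcollar y hy hdyδ
          have hrβnn : (0:ℝ) ≤ r ^ β := Real.rpow_nonneg hr0 β
          have hpow : ∀ s : ℝ, 0 < s → s < 2 * ρ → s ^ α ≤ 2 * r ^ β := by
            intro s hs hslt
            calc s ^ α ≤ (2 * ρ) ^ α := Real.rpow_le_rpow hs.le hslt.le hα0.le
              _ = 2 ^ α * ρ ^ α := Real.mul_rpow (by norm_num) hρpos.le
              _ ≤ 2 * r ^ β := by
                  rw [hρβ]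
                  apply mul_le_mul_of_nonneg_right _ hrβnn
                  calc (2:ℝ) ^ α ≤ 2 ^ (1:ℝ) :=
                        Real.rpow_le_rpow_of_exponent_le (by norm_num) hα1.le
                    _ = 2 := Real.rpow_one 2
          have htx' : |u x / d x + (fderiv ℝ u (Pr x)) (ν (Pr x))| ≤ H * (2 * r ^ β) :=
            (htay x hx hdxδ).trans
              (mul_le_mul_of_nonneg_left (hpow (d x) hdx hdxlt) hH0)
          have hty' : |u y / d y + (fderiv ℝ u (Pr y)) (ν (Pr y))| ≤ H * (2 * r ^ β) :=
            (htay y hy hdyδ).trans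
              (mul_le_mul_of_nonneg_left (hpow (d y) hdy (by linarith)) hH0)
          have hPxy : ‖Pr x - Pr y‖ ≤ (LPr : ℝ) * r := by
            have h := hPrLip.dist_le_mul x hxc y hyc
            rwa [dist_eq_norm, dist_eq_norm] at h
          have hPxmem := hPrMem x hxc
          have hPymem := hPrMem y hyc
          have hrαβ : r ^ α ≤ r ^ β := Real.rpow_le_rpow_of_exponent_ge hr hr1.le hβα
          have hrrβ : r ≤ r ^ β := by
            calc r = r ^ (1:ℝ) := (Real.rpow_one r).symm
              _ ≤ r ^ β := Real.rpow_le_rpow_of_exponent_ge hr hr1.le hβ1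
          have hmid : |(fderiv ℝ u (Pr x)) (ν (Pr x)) - (fderiv ℝ u (Pr y)) (ν (Pr y))|
              ≤ H * ((LPr : ℝ) ^ α * r ^ β) + S₂ * ((Lν : ℝ) * ((LPr : ℝ) * r ^ β)) := by
            have e2 : (fderiv ℝ u (Pr x)) (ν (Pr x)) - (fderiv ℝ u (Pr y)) (ν (Pr y))
                = (fderiv ℝ u (Pr x) - fderiv ℝ u (Pr y)) (ν (Pr x))
                  + (fderiv ℝ u (Pr y)) (ν (Pr x) - ν (Pr y)) := by
              simp only [ContinuousLinearMap.coe_sub', Pi.sub_apply, map_sub]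
              ring
            rw [e2]
            have ht1 : |(fderiv ℝ u (Pr x) - fderiv ℝ u (Pr y)) (ν (Pr x))|
                ≤ H * ((LPr : ℝ) ^ α * r ^ β) := by
              calc |(fderiv ℝ u (Pr x) - fderiv ℝ u (Pr y)) (ν (Pr x))|
                  ≤ ‖fderiv ℝ u (Pr x) - fderiv ℝ u (Pr y)‖ * ‖ν (Pr x)‖ :=
                    (fderiv ℝ u (Pr x) - fderiv ℝ u (Pr y)).le_opNorm (ν (Pr x))
                _ = ‖fderiv ℝ u (Pr x) - fderiv ℝ u (Pr y)‖ := by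
                    rw [hνUnit (Pr x) hPxmem, mul_one]
                _ ≤ H * ‖Pr x - Pr y‖ ^ α :=
                    hHold (Pr x) (frontier_subset_closure hPxmem)
                      (Pr y) (frontier_subset_closure hPymem)
                _ ≤ H * ((LPr : ℝ) ^ α * r ^ β) := by
                    apply mul_le_mul_of_nonneg_left _ hH0
                    calc ‖Pr x - Pr y‖ ^ α ≤ ((LPr : ℝ) * r) ^ α :=
                          Real.rpow_le_rpow (norm_nonneg _) hPxy hα0.le
                      _ = (LPr : ℝ) ^ α * r ^ α := Real.mul_rpow LPr.2 hr0
                      _ ≤ (LPr : ℝ) ^ α * r ^ β := by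
                          apply mul_le_mul_of_nonneg_left hrαβ (by positivity)
            have ht2 : |(fderiv ℝ u (Pr y)) (ν (Pr x) - ν (Pr y))|
                ≤ S₂ * ((Lν : ℝ) * ((LPr : ℝ) * r ^ β)) := by
              calc |(fderiv ℝ u (Pr y)) (ν (Pr x) - ν (Pr y))|
                  ≤ ‖fderiv ℝ u (Pr y)‖ * ‖ν (Pr x) - ν (Pr y)‖ :=
                    (fderiv ℝ u (Pr y)).le_opNorm _
                _ ≤ S₂ * ((Lν : ℝ) * ((LPr : ℝ) * r ^ β)) := by
                    apply mul_le_mul (hS₂le (Pr y) (frontier_subset_closure hPymem))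
                      _ (norm_nonneg _) hS₂0
                    have hν := hνLip.dist_le_mul (Pr x) hPxmem (Pr y) hPymem
                    rw [dist_eq_norm, dist_eq_norm] at hν
                    calc ‖ν (Pr x) - ν (Pr y)‖ ≤ (Lν : ℝ) * ‖Pr x - Pr y‖ := hν
                      _ ≤ (Lν : ℝ) * ((LPr : ℝ) * r) := by
                          apply mul_le_mul_of_nonneg_left hPxy Lν.2
                      _ ≤ (Lν : ℝ) * ((LPr : ℝ) * r ^ β) := by
                          apply mul_le_mul_of_nonneg_left _ Lν.2
                          exact mul_le_mul_of_nonneg_left hrrβ LPr.2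
            exact (abs_add_le _ _).trans (add_le_add ht1 ht2)
          have e3 : u x / d x - u y / d y
              = (u x / d x + (fderiv ℝ u (Pr x)) (ν (Pr x)))
                - (u y / d y + (fderiv ℝ u (Pr y)) (ν (Pr y)))
                - ((fderiv ℝ u (Pr x)) (ν (Pr x)) - (fderiv ℝ u (Pr y)) (ν (Pr y))) := by
            ring
          have habs3 : |u x / d x - u y / d y|
              ≤ |u x / d x + (fderiv ℝ u (Pr x)) (ν (Pr x))|
                + |u y / d y + (fderiv ℝ u (Pr y)) (ν (Pr y))|
                + |(fderiv ℝ u (Pr x)) (ν (Pr x)) - (fderiv ℝ u (Pr y)) (ν (Pr y))| := by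
            have habs_tri : ∀ a b c : ℝ, |a - b - c| ≤ |a| + |b| + |c| := by
              intro a b c
              have h1 : |a - b - c| ≤ |a - b| + |c| := by
                rw [sub_eq_add_neg (a - b) c]
                exact (abs_add_le _ _).trans (by rw [abs_neg])
              have h2 : |a - b| ≤ |a| + |b| := by
                rw [sub_eq_add_neg]
                exact (abs_add_le _ _).trans (by rw [abs_neg])
              linarith
            rw [e3]
            exact habs_tri _ _ _
          have hfinal : H * (2 * r ^ β) + H * (2 * r ^ β)
              + (H * ((LPr : ℝ) ^ α * r ^ β) + S₂ * ((Lν : ℝ) * ((LPr : ℝ) * r ^ β)))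
              ≤ C * M * r ^ β := by
            have hp0 : (0:ℝ) ≤ 2 / (δ * r₀ ^ β) := by positivity
            have hp1 : (0:ℝ) ≤ 2 / δ := by positivity
            have hp2 : (0:ℝ) ≤ (LPr : ℝ) ^ α := by positivity
            have hp3 : (0:ℝ) ≤ (Lν : ℝ) * (LPr : ℝ) := by positivity
            have hCge : 4 + (LPr : ℝ) ^ α + (Lν : ℝ) * (LPr : ℝ) ≤ C := by
              rw [hCdef]; linarith
            have h1 : H * (2 * r ^ β) + H * (2 * r ^ β)
                + (H * ((LPr : ℝ) ^ α * r ^ β) + S₂ * ((Lν : ℝ) * ((LPr : ℝ) * r ^ β)))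
                = (4 * H + H * (LPr : ℝ) ^ α + S₂ * ((Lν : ℝ) * (LPr : ℝ))) * r ^ β := by
              ring
            rw [h1]
            apply mul_le_mul_of_nonneg_right _ hrβnn
            have h2 : 4 * H ≤ 4 * M := by linarith
            have h3 : H * (LPr : ℝ) ^ α ≤ M * (LPr : ℝ) ^ α :=
              mul_le_mul_of_nonneg_right hHM hp2
            have h4 : S₂ * ((Lν : ℝ) * (LPr : ℝ)) ≤ M * ((Lν : ℝ) * (LPr : ℝ)) :=
              mul_le_mul_of_nonneg_right hS₂M hp3
            calc 4 * H + H * (LPr : ℝ) ^ α + S₂ * ((Lν : ℝ) * (LPr : ℝ))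
                ≤ 4 * M + M * (LPr : ℝ) ^ α + M * ((Lν : ℝ) * (LPr : ℝ)) := by linarith
              _ = (4 + (LPr : ℝ) ^ α + (Lν : ℝ) * (LPr : ℝ)) * M := by ring
              _ ≤ C * M := mul_le_mul_of_nonneg_right hCge hM0
          calc |u x / d x - u y / d y|
              ≤ H * (2 * r ^ β) + H * (2 * r ^ β)
                + (H * ((LPr : ℝ) ^ α * r ^ β) + S₂ * ((Lν : ℝ) * ((LPr : ℝ) * r ^ β))) :=
                habs3.trans (add_le_add (add_le_add htx' hty') hmid)
            _ ≤ C * M * r ^ β := hfinal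
  -- conclude by symmetry
  intro x hx y hy
  rcases le_total (d y) (d x) with h | h
  · exact key x hx y hy h
  · rw [abs_sub_comm, norm_sub_rev]
    exact key y hy x hx h
end

section
/- Let Ω ⊆ ℝ^N be a bounded open set with d(x) := dist(x, ∂Ω), let α ∈ (0,1), and set β := α/(α+1). Let u : ℝ^N → ℝ be Lipschitz continuous on the closure of Ω with Lipschitz constant L and with u = 0 on ∂Ω. Suppose x, y ∈ Ω satisfy 0 < |x − y| < 1, d(y) ≤ d(x), and d(x) > |x − y|^{1/(α+1)}. Then |u(x)/d(x) − u(y)/d(y)| ≤ 2L |x − y|^β. -/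
open MeasureTheory Filter Set

theorem stmt_4 (N : ℕ) (Ω : Set (EuclideanSpace ℝ (Fin N)))
    (hΩo : IsOpen Ω) (hΩb : Bornology.IsBounded Ω)
    (d : EuclideanSpace ℝ (Fin N) → ℝ)
    (hd : ∀ x, d x = Metric.infDist x (frontier Ω))
    (α β : ℝ) (hα : α ∈ Set.Ioo (0 : ℝ) 1) (hβ : β = α / (α + 1))
    (u : EuclideanSpace ℝ (Fin N) → ℝ) (L : NNReal)
    (hLip : LipschitzOnWith L u (closure Ω))
    (hzero : ∀ z ∈ frontier Ω, u z = 0)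
    (x y : EuclideanSpace ℝ (Fin N)) (hx : x ∈ Ω) (hy : y ∈ Ω)
    (hxy0 : 0 < ‖x - y‖) (hxy1 : ‖x - y‖ < 1)
    (hdy : d y ≤ d x) (hdx : d x > ‖x - y‖ ^ (1 / (α + 1))) :
    |u x / d x - u y / d y| ≤ 2 * (L : ℝ) * ‖x - y‖ ^ β := by
  obtain ⟨hα0, hα1⟩ := hα
  set r : ℝ := ‖x - y‖ with hr
  have hα1' : (0:ℝ) < α + 1 := by linarith
  have hrpow : (0:ℝ) < r ^ (1 / (α + 1)) := Real.rpow_pos_of_pos hxy0 _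
  have hdxpos : 0 < d x := lt_trans hrpow hdx
  -- frontier is nonempty
  have hfr : (frontier Ω).Nonempty := by
    by_contra h
    rw [Set.not_nonempty_iff_eq_empty] at h
    rw [hd x, h, Metric.infDist_empty] at hdxpos
    exact lt_irrefl 0 hdxpos
  have hdypos : 0 < d y := by
    rw [hd y]
    refine (isClosed_frontier.notMem_iff_infDist_pos hfr).mp ?_
    intro hmem
    exact (disjoint_frontier_iff_isOpen.mpr hΩo).le_bot ⟨hmem, hy⟩
  have hdist : dist x y = r := by rw [hr, dist_eq_norm]
  -- |u x - u y| ≤ L * r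
  have hux : |u x - u y| ≤ (L : ℝ) * r := by
    have h2 := hLip.dist_le_mul x (subset_closure hx) y (subset_closure hy)
    rwa [Real.dist_eq, dist_eq_norm] at h2
  -- |u y| ≤ L * d y
  have huy : |u y| ≤ (L : ℝ) * d y := by
    refine le_of_forall_pos_le_add fun ε hε => ?_
    have hε' : 0 < ε / ((L : ℝ) + 1) := by positivity
    obtain ⟨z, hz, hzlt⟩ := (Metric.infDist_lt_iff hfr).mp
      (show Metric.infDist y (frontier Ω) < d y + ε / ((L:ℝ)+1) by rw [← hd y]; linarith)
    have hzc : z ∈ closure Ω := by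
      have := frontier_subset_closure (s := Ω)
      exact this hz
    have h1 : dist (u y) (u z) ≤ (L : ℝ) * dist y z :=
      hLip.dist_le_mul y (subset_closure hy) z hzc
    rw [hzero z hz] at h1
    have h2 : |u y| ≤ (L : ℝ) * dist y z := by rwa [dist_zero_right, Real.norm_eq_abs] at h1
    have h3 : (L : ℝ) * dist y z ≤ (L : ℝ) * (d y + ε / ((L:ℝ)+1)) :=
      mul_le_mul_of_nonneg_left hzlt.le L.coe_nonneg
    have h4 : (L : ℝ) * (ε / ((L:ℝ)+1)) ≤ ε := by
      rw [mul_div_assoc']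
      rw [div_le_iff₀ (by positivity)]
      nlinarith [L.coe_nonneg, hε.le]
    nlinarith [L.coe_nonneg]
  -- |d x - d y| ≤ r
  have hdd : d x - d y ≤ r := by
    rw [hd x, hd y]
    have := Metric.infDist_le_infDist_add_dist (x := x) (y := y) (s := frontier Ω)
    rw [hdist] at this
    linarith
  -- main split
  have hsplit : u x / d x - u y / d y
      = (u x - u y) / d x + u y * (d y - d x) / (d x * d y) := by
    field_simp
    ring
  have hA : |(u x - u y) / d x| ≤ (L : ℝ) * r / d x := by
    rw [abs_div, abs_of_pos hdxpos]
    gcongr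
  have hB : |u y * (d y - d x) / (d x * d y)| ≤ (L : ℝ) * r / d x := by
    rw [abs_div, abs_mul, abs_of_pos (mul_pos hdxpos hdypos)]
    have h1 : |u y| * |d y - d x| ≤ ((L : ℝ) * d y) * r := by
      have h2 : |d y - d x| ≤ r := by rw [abs_sub_comm, abs_of_nonneg (by linarith)]; exact hdd
      exact mul_le_mul huy h2 (abs_nonneg _) (by positivity)
    calc |u y| * |d y - d x| / (d x * d y) ≤ ((L : ℝ) * d y) * r / (d x * d y) := by
          gcongr
      _ = (L : ℝ) * r / d x := by field_simp
  have hmain : |u x / d x - u y / d y| ≤ 2 * (L : ℝ) * (r / d x) := by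
    rw [hsplit]
    calc |(u x - u y) / d x + u y * (d y - d x) / (d x * d y)|
        ≤ |(u x - u y) / d x| + |u y * (d y - d x) / (d x * d y)| := abs_add_le _ _
      _ ≤ (L : ℝ) * r / d x + (L : ℝ) * r / d x := add_le_add hA hB
      _ = 2 * (L : ℝ) * (r / d x) := by ring
  -- r / d x ≤ r ^ β
  have hrb : r / d x ≤ r ^ β := by
    have h1 : r / d x ≤ r / r ^ (1 / (α + 1)) :=
      div_le_div_of_nonneg_left hxy0.le hrpow hdx.le
    have h2 : r / r ^ (1 / (α + 1)) = r ^ β := by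
      rw [hβ]
      rw [show r / r ^ (1/(α+1)) = r ^ (1:ℝ) / r ^ (1/(α+1)) by rw [Real.rpow_one],
        ← Real.rpow_sub hxy0]
      congr 1
      field_simp
      ring
    linarith [h1, h2.le]
  calc |u x / d x - u y / d y| ≤ 2 * (L : ℝ) * (r / d x) := hmain
    _ ≤ 2 * (L : ℝ) * r ^ β := by
        apply mul_le_mul_of_nonneg_left hrb (by positivity)
end

section
/- Let f : ℝ^N → ℝ be Lipschitz continuous and let D ⊆ ℝ be a set of Lebesgue measure zero. Then for almost every x ∈ f⁻¹(D) (with respect to Lebesgue measure on ℝ^N), f is differentiable at x and its total derivative at x is zero. -/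
open MeasureTheory Filter Set
open scoped NNReal ENNReal


-- aux: expanding maps have null domain if null image
theorem auxNull {E : Type*} [NormedAddCommGroup E] [NormedSpace ℝ E] [FiniteDimensional ℝ E]
    [MeasurableSpace E] [BorelSpace E] (μ : Measure E) [μ.IsAddHaarMeasure]
    (F : E → E) (s : Set E) (f' : E → E →L[ℝ] E)
    (hF : ∀ x ∈ s, HasFDerivWithinAt F (f' x) s x)
    (hdet : ∀ x ∈ s, (f' x).det ≠ 0) (himg : μ (F '' s) = 0) : μ s = 0 := by
  rcases eq_empty_or_nonempty s with rfl | hne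
  · simp
  have key : ∀ A : E →L[ℝ] E, ∃ δ : ℝ≥0, 0 < δ ∧ (A.det ≠ 0 →
      ∀ (t : Set E) (g : E → E), ApproximatesLinearOn g A t δ →
        ((Real.toNNReal |A.det| / 2 : ℝ≥0) : ℝ≥0∞) * μ t ≤ μ (g '' t)) := by
    intro A
    by_cases hA : A.det = 0
    · exact ⟨1, one_pos, fun h => absurd hA h⟩
    have hm : ((Real.toNNReal |A.det| / 2 : ℝ≥0) : ℝ≥0∞) < ENNReal.ofReal |A.det| := by
      rw [ENNReal.ofReal, ENNReal.coe_lt_coe]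
      exact NNReal.half_lt_self (by simpa [Real.toNNReal_eq_zero, not_le, abs_pos] using hA)
    rcases ((mul_le_addHaar_image_of_lt_det μ A hm).and self_mem_nhdsWithin).exists with
      ⟨δ, h, h'⟩
    exact ⟨δ, h', fun _ t g ht => h t g ht⟩
  choose δ δpos hδ using key
  obtain ⟨t, A, t_disj, t_meas, t_cover, ht, Af'⟩ :=
    exists_partition_approximatesLinearOn_of_hasFDerivWithinAt F s f' hF δ
      (fun A => (δpos A).ne')
  have hzero : ∀ n, μ (s ∩ t n) = 0 := by
    intro n
    obtain ⟨y, ys, hy⟩ := Af' hne n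
    have hd : (A n).det ≠ 0 := by rw [hy]; exact hdet y ys
    have := hδ (A n) hd (s ∩ t n) F (ht n)
    have hle : ((Real.toNNReal |(A n).det| / 2 : ℝ≥0) : ℝ≥0∞) * μ (s ∩ t n) = 0 :=
      le_antisymm (this.trans ((measure_mono (image_mono inter_subset_left)).trans
        himg.le)) zero_le
    rcases mul_eq_zero.1 hle with h | h
    · exfalso
      rw [ENNReal.coe_eq_zero] at h
      have : Real.toNNReal |(A n).det| = 0 := by
        have := div_eq_zero_iff.1 h
        simpa using this
      rw [Real.toNNReal_eq_zero] at this
      exact hd (abs_eq_zero.1 (le_antisymm this (abs_nonneg _)))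
    · exact h
  refine le_antisymm ?_ zero_le
  calc μ s ≤ μ (⋃ n, s ∩ t n) := by
        refine measure_mono ?_
        rw [← inter_iUnion]
        exact subset_inter Subset.rfl t_cover
    _ ≤ ∑' n, μ (s ∩ t n) := measure_iUnion_le _
    _ = 0 := by simp [hzero]

theorem detAux (N : ℕ) (i : Fin N) (g : EuclideanSpace ℝ (Fin N) →L[ℝ] ℝ) :
    (ContinuousLinearMap.id ℝ (EuclideanSpace ℝ (Fin N)) +
      (g - EuclideanSpace.proj i).smulRight (EuclideanSpace.single i 1)).det =
      g (EuclideanSpace.single i 1) := by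
  set L := ContinuousLinearMap.id ℝ (EuclideanSpace ℝ (Fin N)) +
      (g - EuclideanSpace.proj i).smulRight (EuclideanSpace.single i 1) with hL
  set b := (EuclideanSpace.basisFun (Fin N) ℝ).toBasis with hb
  have : L.det = LinearMap.det (L : EuclideanSpace ℝ (Fin N) →ₗ[ℝ] EuclideanSpace ℝ (Fin N)) := rfl
  rw [this, ← LinearMap.det_toMatrix b]
  have hM : LinearMap.toMatrix b b (L : EuclideanSpace ℝ (Fin N) →ₗ[ℝ] EuclideanSpace ℝ (Fin N)) =
      1 + Matrix.replicateCol Unit (Pi.single i (1:ℝ)) * Matrix.replicateRow Unit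
        (fun k => g (EuclideanSpace.single k 1) - (Pi.single i 1 : Fin N → ℝ) k) := by
    ext j k
    rw [LinearMap.toMatrix_apply]
    simp only [ContinuousLinearMap.coe_coe, hL, ContinuousLinearMap.add_apply,
      ContinuousLinearMap.id_apply, ContinuousLinearMap.smulRight_apply,
      ContinuousLinearMap.sub_apply, PiLp.proj_apply]
    rw [OrthonormalBasis.coe_toBasis_repr_apply, EuclideanSpace.basisFun_repr,
      OrthonormalBasis.coe_toBasis, EuclideanSpace.basisFun_apply]
    simp only [Matrix.add_apply, Matrix.one_apply, Matrix.mul_apply, Matrix.replicateCol_apply,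
      Matrix.replicateRow_apply, Finset.sum_const, Finset.card_univ, Fintype.card_unit, one_smul]
    simp only [PiLp.add_apply, PiLp.smul_apply, EuclideanSpace.single_apply, Pi.single_apply,
      smul_eq_mul]
    rw [show (if i = k then (1:ℝ) else 0) = if k = i then 1 else 0 from by simp [eq_comm]]
    ring
  rw [hM, Matrix.det_one_add_replicateCol_mul_replicateRow]
  simp [dotProduct_single, Pi.single_eq_same]

theorem stmt_7 (N : ℕ) (f : EuclideanSpace ℝ (Fin N) → ℝ) (K : NNReal)
    (hf : LipschitzWith K f) (D : Set ℝ) (hD : volume D = 0) :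
    ∀ᵐ x ∂(volume.restrict (f ⁻¹' D)),
      DifferentiableAt ℝ f x ∧ fderiv ℝ f x = 0 := by
  classical
  have hslice : ∀ i : Fin N, volume {y : EuclideanSpace ℝ (Fin N) | y i ∈ D} = 0 := by
    intro i
    have h1 : (volume : Measure (Fin N → ℝ)) (Function.eval i ⁻¹' D) = 0 := by
      rw [volume_pi]; exact Measure.pi_eval_preimage_null (μ := fun _ => (volume : Measure ℝ)) hD
    have h2 := (EuclideanSpace.volume_preserving_symm_measurableEquiv_toLp
      (Fin N)).quasiMeasurePreserving.preimage_null h1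
    exact h2
  have hAi : ∀ i : Fin N, volume {x : EuclideanSpace ℝ (Fin N) |
      DifferentiableAt ℝ f x ∧ f x ∈ D ∧
        fderiv ℝ f x (EuclideanSpace.single i 1) ≠ 0} = 0 := by
    intro i
    set s := {x : EuclideanSpace ℝ (Fin N) | DifferentiableAt ℝ f x ∧ f x ∈ D ∧
      fderiv ℝ f x (EuclideanSpace.single i 1) ≠ 0} with hs
    refine auxNull volume
      (fun x => x + (f x - x i) • EuclideanSpace.single i 1) s
      (fun x => ContinuousLinearMap.id ℝ (EuclideanSpace ℝ (Fin N)) +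
        (fderiv ℝ f x - EuclideanSpace.proj i).smulRight (EuclideanSpace.single i 1))
      ?_ ?_ ?_
    · intro x hx
      refine HasFDerivAt.hasFDerivWithinAt ?_
      have h1 : HasFDerivAt (fun y : EuclideanSpace ℝ (Fin N) => f y - y i)
          (fderiv ℝ f x - EuclideanSpace.proj i) x :=
        (hx.1.hasFDerivAt).sub
          (show HasFDerivAt (fun y : EuclideanSpace ℝ (Fin N) => y i)
              (EuclideanSpace.proj (𝕜 := ℝ) i) x from
            ContinuousLinearMap.hasFDerivAt (EuclideanSpace.proj (𝕜 := ℝ) i))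
      exact (hasFDerivAt_id x).add (h1.smul_const _)
    · intro x hx
      rw [detAux]
      exact hx.2.2
    · refine measure_mono_null ?_ (hslice i)
      rintro _ ⟨x, hx, rfl⟩
      have : (x + (f x - x i) • EuclideanSpace.single i (1:ℝ)) i = f x := by
        simp [PiLp.add_apply, PiLp.smul_apply, EuclideanSpace.single_apply, smul_eq_mul]
      simpa [this] using hx.2.1
  set u := {x : EuclideanSpace ℝ (Fin N) | DifferentiableAt ℝ f x ∧ fderiv ℝ f x ≠ 0} with hu
  have humeas : MeasurableSet u :=
    (measurableSet_of_differentiableAt ℝ f).inter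
      ((measurable_fderiv ℝ f) (measurableSet_singleton 0).compl)
  have hS : volume (u ∩ f ⁻¹' D) = 0 := by
    refine measure_mono_null ?_ (measure_iUnion_null fun i => hAi i)
    intro x hx
    have hdiff : DifferentiableAt ℝ f x := hx.1.1
    have hne : fderiv ℝ f x ≠ 0 := hx.1.2
    have : ∃ i, fderiv ℝ f x (EuclideanSpace.single i 1) ≠ 0 := by
      by_contra h
      push_neg at h
      refine hne (ContinuousLinearMap.coe_injective ?_)
      refine Module.Basis.ext (EuclideanSpace.basisFun (Fin N) ℝ).toBasis fun i => ?_
      rw [OrthonormalBasis.coe_toBasis, EuclideanSpace.basisFun_apply]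
      simpa using h i
    obtain ⟨i, hi⟩ := this
    exact mem_iUnion.2 ⟨i, ⟨hdiff, hx.2, hi⟩⟩
  have hdiffae : ∀ᵐ x ∂(volume.restrict (f ⁻¹' D)), DifferentiableAt ℝ f x :=
    (hf.ae_differentiableAt (μ := volume)).filter_mono (ae_mono Measure.restrict_le_self)
  have hbad : ∀ᵐ x ∂(volume.restrict (f ⁻¹' D)), x ∉ u := by
    rw [← measure_eq_zero_iff_ae_notMem, Measure.restrict_apply humeas]
    exact hS
  filter_upwards [hdiffae, hbad] with x h1 h2
  exact ⟨h1, by_contra fun hne => h2 ⟨h1, hne⟩⟩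
end
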